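/- Let π be a permutation of a non-empty finite set S and let 𝒞 = {E ⊆ S : π(E) = E}. Then Σ_{E ∈ 𝒞, E ≠ ∅} (-1)^{|E|+1} · sgn(π|_E) = 1. -/

import Mathlib

open scoped Classical

section Aux

variable {S : Type*} [Fintype S]

private lemma aux_pow_mem (π : Equiv.Perm S) {E : Finset S}
    (hE : ∀ x, x ∈ E ↔ π x ∈ E) (n : ℕ) : ∀ x ∈ E, (π ^ n) x ∈ E := by
  induction n with
  | zero => simpa using fun x hx => hx
  | succ n ih =>
    intro x hx
    rw [pow_succ, Equiv.Perm.mul_apply]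
    exact ih _ ((hE x).1 hx)

private lemma aux_ofSubtype_union (π : Equiv.Perm S) {A B : Finset S} (hd : Disjoint A B)
    (hA : ∀ x, x ∈ A ↔ π x ∈ A) (hB : ∀ x, x ∈ B ↔ π x ∈ B)
    (hU : ∀ x, x ∈ A ∪ B ↔ π x ∈ A ∪ B) :
    Equiv.Perm.ofSubtype (π.subtypePerm (fun x => (hU x).symm)) =
      Equiv.Perm.ofSubtype (π.subtypePerm (fun x => (hA x).symm)) * Equiv.Perm.ofSubtype (π.subtypePerm (fun x => (hB x).symm)) := by
  ext x
  by_cases hxA : x ∈ A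
  · have hxU : x ∈ A ∪ B := Finset.mem_union_left _ hxA
    have hxB : x ∉ B := Finset.disjoint_left.1 hd hxA
    rw [Equiv.Perm.mul_apply,
      Equiv.Perm.ofSubtype_apply_of_not_mem (p := (· ∈ B)) _ hxB,
      Equiv.Perm.ofSubtype_apply_of_mem (p := (· ∈ A)) _ hxA,
      Equiv.Perm.ofSubtype_apply_of_mem (p := (· ∈ A ∪ B)) _ hxU]
    rfl
  · by_cases hxB : x ∈ B
    · have hxU : x ∈ A ∪ B := Finset.mem_union_right _ hxB
      have hpxB : π x ∈ B := (hB x).1 hxB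
      have hpxA : π x ∉ A := Finset.disjoint_right.1 hd hpxB
      rw [Equiv.Perm.mul_apply,
        Equiv.Perm.ofSubtype_apply_of_mem (p := (· ∈ B)) _ hxB,
        Equiv.Perm.ofSubtype_apply_of_mem (p := (· ∈ A ∪ B)) _ hxU]
      exact ((Equiv.Perm.ofSubtype_apply_of_not_mem (p := (· ∈ A)) _ hpxA).trans rfl).symm
    · have hxU : x ∉ A ∪ B := by simp [hxA, hxB]
      rw [Equiv.Perm.mul_apply,
        Equiv.Perm.ofSubtype_apply_of_not_mem (p := (· ∈ A ∪ B)) _ hxU,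
        Equiv.Perm.ofSubtype_apply_of_not_mem (p := (· ∈ B)) _ hxB,
        Equiv.Perm.ofSubtype_apply_of_not_mem (p := (· ∈ A)) _ hxA]

private lemma aux_sign_union (π : Equiv.Perm S) {A B : Finset S} (hd : Disjoint A B)
    (hA : ∀ x, x ∈ A ↔ π x ∈ A) (hB : ∀ x, x ∈ B ↔ π x ∈ B)
    (hU : ∀ x, x ∈ A ∪ B ↔ π x ∈ A ∪ B) :
    Equiv.Perm.sign (π.subtypePerm (fun x => (hU x).symm)) =
      Equiv.Perm.sign (π.subtypePerm (fun x => (hA x).symm)) * Equiv.Perm.sign (π.subtypePerm (fun x => (hB x).symm)) := by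
  have h := congrArg Equiv.Perm.sign (aux_ofSubtype_union π hd hA hB hU)
  rw [map_mul, Equiv.Perm.sign_ofSubtype, Equiv.Perm.sign_ofSubtype,
    Equiv.Perm.sign_ofSubtype] at h
  convert h using 2 <;> congr!

end Aux

/-- for a permutation `π` of a nonempty finite set `S`, the alternating sum
`Σ (-1)^{|E|+1} sgn(π|_E)` over all nonempty `π`-invariant subsets `E ⊆ S` equals 1. -/
theorem alternating_sum_sign_invariant_subsets {S : Type*} [Fintype S] [Nonempty S]
    (π : Equiv.Perm S) :
    (∑ E ∈ (Finset.univ : Finset S).powerset,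
      if h : E.Nonempty ∧ ∀ x, x ∈ E ↔ π x ∈ E then
        ((-1 : ℤ) ^ (E.card + 1)) * (Equiv.Perm.sign (π.subtypePerm (fun x => (h.2 x).symm)) : ℤ)
      else 0) = 1 := by
  classical
  obtain ⟨a⟩ := ‹Nonempty S›
  set f : Finset S → ℤ := fun E =>
    if h : E.Nonempty ∧ ∀ x, x ∈ E ↔ π x ∈ E then
      ((-1 : ℤ) ^ (E.card + 1)) * (Equiv.Perm.sign (π.subtypePerm (fun x => (h.2 x).symm)) : ℤ)
    else 0 with hf
  -- the orbit of `a`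
  set O : Finset S := Finset.univ.filter (π.SameCycle a) with hOdef
  have hmemO : ∀ x, x ∈ O ↔ π.SameCycle a x := by
    intro x; simp [hOdef]
  have hOinv : ∀ x, x ∈ O ↔ π x ∈ O := by
    intro x
    simp only [hmemO]
    exact (Equiv.Perm.sameCycle_apply_right (f := π)).symm
  have haO : a ∈ O := (hmemO a).2 (Equiv.Perm.SameCycle.refl π a)
  have hOne : O.Nonempty := ⟨a, haO⟩
  -- orbit absorption: an invariant set meeting `O` contains `O`
  have habsorb : ∀ {E : Finset S}, (∀ x, x ∈ E ↔ π x ∈ E) → ∀ {x}, x ∈ E → x ∈ O → O ⊆ E := by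
    intro E hE x hxE hxO y hyO
    have hxy : π.SameCycle x y := ((hmemO x).1 hxO).symm.trans ((hmemO y).1 hyO)
    obtain ⟨i, -, hi⟩ := hxy.exists_pow_eq'
    exact hi ▸ aux_pow_mem π hE i x hxE
  -- sign of the restriction of π to the orbit O
  have hsignO : ∀ (h : ∀ x, x ∈ O ↔ π x ∈ O),
      (Equiv.Perm.sign (π.subtypePerm (fun x => (h x).symm)) : ℤˣ) = (-1) ^ (O.card + 1) := by
    intro h
    have hkey : Equiv.Perm.ofSubtype (π.subtypePerm (fun x => (h x).symm)) = π.cycleOf a := by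
      ext x
      by_cases hx : x ∈ O
      · rw [Equiv.Perm.ofSubtype_apply_of_mem (p := (· ∈ O)) _ hx, Equiv.Perm.cycleOf_apply,
          if_pos ((hmemO x).1 hx)]
        rfl
      · rw [Equiv.Perm.ofSubtype_apply_of_not_mem (p := (· ∈ O)) _ hx, Equiv.Perm.cycleOf_apply,
          if_neg (fun hc => hx ((hmemO x).2 hc))]
    have hsign : Equiv.Perm.sign (π.subtypePerm (fun x => (h x).symm)) = Equiv.Perm.sign (π.cycleOf a) := by
      rw [← hkey, Equiv.Perm.sign_ofSubtype]
    by_cases ha : π a = a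
    · have h1 : π.cycleOf a = 1 := (Equiv.Perm.cycleOf_eq_one_iff π).2 ha
      have hOcard : O = {a} := by
        ext x
        simp only [hmemO, Finset.mem_singleton]
        constructor
        · rintro ⟨n, rfl⟩
          exact Equiv.Perm.zpow_apply_eq_self_of_apply_eq_self ha n
        · rintro rfl; exact Equiv.Perm.SameCycle.refl _ _
      rw [hsign, h1, hOcard]
      simp
    · have hc : (π.cycleOf a).IsCycle := Equiv.Perm.isCycle_cycleOf π ha
      have hsupp : (π.cycleOf a).support = O := by
        ext y
        rw [Equiv.Perm.mem_support_cycleOf_iff, hmemO]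
        simp [Equiv.Perm.mem_support, ha]
      rw [hsign, hc.sign, hsupp, pow_succ, mul_neg_one]
  -- symmDiff of invariant sets is invariant
  have hsymmInv : ∀ {A B : Finset S}, (∀ x, x ∈ A ↔ π x ∈ A) → (∀ x, x ∈ B ↔ π x ∈ B) →
      ∀ x, x ∈ symmDiff A B ↔ π x ∈ symmDiff A B := by
    intro A B hA hB x
    simp only [Finset.mem_symmDiff, hA x, hB x]
  -- core cancellation: for invariant nonempty A disjoint from O, f (A ∪ O) = - f A
  have hcore : ∀ {A : Finset S}, A.Nonempty → Disjoint A O → (∀ x, x ∈ A ↔ π x ∈ A) →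
      f (A ∪ O) = - f A := by
    intro A hAne hAd hAinv
    have hUinv : ∀ x, x ∈ A ∪ O ↔ π x ∈ A ∪ O := by
      intro x; simp only [Finset.mem_union, hAinv x, hOinv x]
    have hUne : (A ∪ O).Nonempty := hAne.mono Finset.subset_union_left
    simp only [hf]
    rw [dif_pos ⟨hUne, hUinv⟩, dif_pos ⟨hAne, hAinv⟩]
    have hs := aux_sign_union π hAd hAinv hOinv hUinv
    rw [hsignO hOinv] at hs
    have hs' : (Equiv.Perm.sign (π.subtypePerm (fun x => (hUinv x).symm)) : ℤ) =
        (Equiv.Perm.sign (π.subtypePerm (fun x => (hAinv x).symm)) : ℤ) * (-1) ^ (O.card + 1) := by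
      have := congrArg (fun u : ℤˣ => (u : ℤ)) hs
      simpa [Units.val_mul, Units.val_pow_eq_pow_val] using this
    calc ((-1 : ℤ) ^ ((A ∪ O).card + 1)) * (Equiv.Perm.sign (π.subtypePerm (fun x => (hUinv x).symm)) : ℤ)
        = ((-1 : ℤ) ^ (A.card + O.card + 1)) *
            ((Equiv.Perm.sign (π.subtypePerm (fun x => (hAinv x).symm)) : ℤ) * (-1) ^ (O.card + 1)) := by
          rw [Finset.card_union_of_disjoint hAd, hs']
      _ = -(((-1 : ℤ) ^ (A.card + 1)) * (Equiv.Perm.sign (π.subtypePerm (fun x => (hAinv x).symm)) : ℤ)) *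
            (((-1 : ℤ) ^ O.card) * ((-1 : ℤ) ^ O.card)) := by ring
      _ = -(((-1 : ℤ) ^ (A.card + 1)) * (Equiv.Perm.sign (π.subtypePerm (fun x => (hAinv x).symm)) : ℤ)) := by
          rw [← pow_add, Even.neg_one_pow ⟨O.card, rfl⟩, mul_one]
  -- f of the orbit is 1
  have hfO : f O = 1 := by
    simp only [hf]
    rw [dif_pos ⟨hOne, hOinv⟩]
    have := hsignO hOinv
    have h' : (Equiv.Perm.sign (π.subtypePerm (fun x => (hOinv x).symm)) : ℤ) = (-1) ^ (O.card + 1) := by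
      have h2 := congrArg (fun u : ℤˣ => (u : ℤ)) this
      simpa [Units.val_pow_eq_pow_val] using h2
    rw [h', ← pow_add, Even.neg_one_pow ⟨O.card + 1, by ring⟩]
  -- split the sum
  have hOempty : O ≠ ∅ := Finset.nonempty_iff_ne_empty.1 hOne
  set s : Finset (Finset S) := (Finset.univ : Finset S).powerset \ {∅, O} with hs
  have hsubset : ({∅, O} : Finset (Finset S)) ⊆ (Finset.univ : Finset S).powerset := by
    intro E hE
    simp only [Finset.mem_insert, Finset.mem_singleton] at hE
    rcases hE with rfl | rfl <;> simp
  have hsplit : (Finset.univ : Finset S).powerset = {∅, O} ∪ s := by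
    rw [hs, Finset.union_sdiff_of_subset hsubset]
  have hdisj : Disjoint ({∅, O} : Finset (Finset S)) s := Finset.disjoint_sdiff
  -- the involution on s
  have hzero : ∑ E ∈ s, f E = 0 := by
    apply Finset.sum_involution (fun E _ => symmDiff E O)
    · -- f E + f (E Δ O) = 0
      intro E hE
      simp only [hs, Finset.mem_sdiff, Finset.mem_powerset, Finset.mem_insert,
        Finset.mem_singleton, not_or] at hE
      obtain ⟨-, hEne, hEO⟩ := hE
      by_cases hinv : E.Nonempty ∧ ∀ x, x ∈ E ↔ π x ∈ E
      · obtain ⟨hEnon, hEinv⟩ := hinv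
        by_cases hmeet : Disjoint E O
        · have : symmDiff E O = E ∪ O := hmeet.symmDiff_eq_sup
          rw [this, hcore hEnon hmeet hEinv]; ring
        · -- O ⊆ E
          obtain ⟨x, hxE, hxO⟩ := Finset.not_disjoint_iff.1 hmeet
          have hOE : O ⊆ E := habsorb hEinv hxE hxO
          have hsd : symmDiff E O = E \ O := by
            rw [symmDiff_of_ge (Finset.le_iff_subset.2 hOE)]
          have hAinv : ∀ x, x ∈ E \ O ↔ π x ∈ E \ O := by
            intro y; simp only [Finset.mem_sdiff, hEinv y, hOinv y]
          have hAne : (E \ O).Nonempty := by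
            rw [Finset.sdiff_nonempty]
            intro hEsub
            exact hEO (le_antisymm hEsub hOE)
          have hAd : Disjoint (E \ O) O := Finset.sdiff_disjoint
          have hEeq : (E \ O) ∪ O = E := Finset.sdiff_union_of_subset hOE
          have := hcore hAne hAd hAinv
          rw [hEeq] at this
          rw [hsd, this]; ring
      · have h2 : ¬((symmDiff E O).Nonempty ∧ ∀ x, x ∈ symmDiff E O ↔ π x ∈ symmDiff E O) := by
          rintro ⟨-, hinv2⟩
          apply hinv
          have := hsymmInv hinv2 hOinv
          rw [symmDiff_symmDiff_cancel_right] at this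
          refine ⟨Finset.nonempty_iff_ne_empty.2 hEne, this⟩
        simp only [hf]
        rw [dif_neg hinv, dif_neg h2, add_zero]
    · -- g E ≠ E when f E ≠ 0
      intro E hE hfE
      intro hcontra
      have : O = ∅ := by
        have := symmDiff_eq_left.1 hcontra
        simpa using this
      exact hOempty this
    · -- g maps into s
      intro E hE
      simp only [hs, Finset.mem_sdiff, Finset.mem_powerset, Finset.mem_insert,
        Finset.mem_singleton, not_or] at hE ⊢
      obtain ⟨-, hEne, hEO⟩ := hE
      refine ⟨Finset.subset_univ _, ?_, ?_⟩
      · intro hc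
        exact hEO (symmDiff_eq_bot.1 hc)
      · intro hc
        apply hEne
        have := congrArg (fun T => symmDiff T O) hc
        simp only [symmDiff_symmDiff_cancel_right, symmDiff_self] at this
        simpa using this
    · -- involution
      intro E hE
      exact symmDiff_symmDiff_cancel_right O E
  rw [hsplit, Finset.sum_union hdisj, hzero, add_zero,
    Finset.sum_pair (Ne.symm hOempty)]
  have hfempty : f ∅ = 0 := by
    simp only [hf]
    rw [dif_neg (by simp)]
  show f ∅ + f O = 1
  rw [hfempty, hfO, zero_add]
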